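/- Let n_max ≥ 2, K ≥ 1 and N ≥ 1 be integers, and let VALID, S = S_{n_max} × S_{η₁} × ⋯ × S_{η_N} × S_{2K} and the permutations Γ_φ be as in the ZKPPC construction. Fix w ∈ VALID. If φ is drawn uniformly at random from S, then Γ_φ(w) is uniformly distributed over VALID; that is, the pushforward of the uniform probability distribution on S under the map φ ↦ Γ_φ(w) equals the uniform probability distribution on VALID. -/

import Mathlib

open scoped ENNReal Classical

/-- `bin(k)`: the `⌈log₂ n⌉`-bit binary representation of `k ∈ {0,…,n−1}`,
as a length-`⌈log₂ n⌉` vector over `ℤ` with entries in `{0,1}`. -/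
def binRep (n : ℕ) (k : Fin n) : Fin (Nat.clog 2 n) → ℤ :=
  fun i => (((k : ℕ) / 2 ^ (i : ℕ)) % 2 : ℕ)

/-- The set `VALID` of the ZKPPC construction: vectors `w = (e₀ ‖ x₁ ‖ … ‖ x_N ‖ z)`
(in block representation) with `e₀ ∈ SET₀` (its `n_max` blocks are exactly
`bin(0), …, bin(n_max−1)` in some order), `x_j ∈ SET_j` (its `η_j` blocks are exactly
`v^{(j)}_1, …, v^{(j)}_{η_j}` in some order) for every `j`, and `z ∈ B²_K`. -/
def VALID (nmax K N : ℕ) (η : Fin N → ℕ) (v : (j : Fin N) → Fin (η j) → Fin 8 → ℤ) :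
    Set ((Fin nmax → Fin (Nat.clog 2 nmax) → ℤ)
          × ((j : Fin N) → Fin (η j) → Fin 8 → ℤ) × (Fin (K + K) → ℤ)) :=
  {w | Set.range w.1 = Set.range (binRep nmax)
        ∧ (∀ j, Set.range (w.2.1 j) = Set.range (v j))
        ∧ (∀ i, w.2.2 i = 0 ∨ w.2.2 i = 1)
        ∧ (Finset.univ.filter fun i => w.2.2 i = 1).card = K}

/-- The permutation `Γ_φ` for `φ = (π, τ₁, …, τ_N, θ)`:
`Γ_φ(e₀ ‖ x₁ ‖ … ‖ x_N ‖ z) = (T_{π,⌈log₂ n_max⌉}(e₀) ‖ T_{τ₁,8}(x₁) ‖ … ‖ T_{τ_N,8}(x_N) ‖ θ(z))`. -/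
def Gamma (nmax K N : ℕ) (η : Fin N → ℕ)
    (φ : Equiv.Perm (Fin nmax) × ((j : Fin N) → Equiv.Perm (Fin (η j)))
          × Equiv.Perm (Fin (K + K)))
    (w : (Fin nmax → Fin (Nat.clog 2 nmax) → ℤ)
          × ((j : Fin N) → Fin (η j) → Fin 8 → ℤ) × (Fin (K + K) → ℤ)) :
    (Fin nmax → Fin (Nat.clog 2 nmax) → ℤ)
      × ((j : Fin N) → Fin (η j) → Fin 8 → ℤ) × (Fin (K + K) → ℤ) :=
  (fun j => w.1 (φ.1 j), fun j k => w.2.1 j (φ.2.1 j k), fun i => w.2.2 (φ.2.2 i))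

section helpers
-- (assume helpers from t2 here via copy later)
lemma aux_exists_perm {α β : Type*} [Fintype α] (f g : α → β)
    (h : ∀ b, Nat.card {a // f a = b} = Nat.card {a // g a = b}) :
    ∃ σ : Equiv.Perm α, ∀ a, f (σ a) = g a := by
  have e : ∀ b, {a // g a = b} ≃ {a // f a = b} := fun b =>
    Fintype.equivOfCardEq (by
      have := (h b).symm
      simpa [Nat.card_eq_fintype_card] using this)
  refine ⟨(Equiv.sigmaFiberEquiv g).symm.trans
    ((Equiv.sigmaCongrRight e).trans (Equiv.sigmaFiberEquiv f)), fun a => ?_⟩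
  simpa [Equiv.sigmaFiberEquiv] using (e (g a) ⟨a, rfl⟩).2

lemma card_fiber_of_injective {α β : Type*} [Finite α] {f : α → β} (hf : Function.Injective f) (b : β) :
    Nat.card {a // f a = b} = if b ∈ Set.range f then 1 else 0 := by
  split_ifs with hb
  · obtain ⟨a, ha⟩ := hb
    rw [Nat.card_eq_one_iff_unique]
    exact ⟨⟨fun x y => Subtype.ext (hf (x.2.trans y.2.symm))⟩, ⟨⟨a, ha⟩⟩⟩
  · have : IsEmpty {a // f a = b} := ⟨fun x => hb ⟨x.1, x.2⟩⟩
    exact Nat.card_of_isEmpty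

lemma inj_of_range_eq {α β : Type*} [Finite α] {f g : α → β} (hg : Function.Injective g)
    (h : Set.range f = Set.range g) : Function.Injective f := by
  have hbij : Function.Bijective (Set.rangeFactorization f) := by
    rw [Nat.bijective_iff_surjective_and_card]
    refine ⟨Set.rangeFactorization_surjective, ?_⟩
    rw [h, Nat.card_range_of_injective hg]
  have : f = Subtype.val ∘ Set.rangeFactorization f := rfl
  rw [this]
  exact Subtype.val_injective.comp hbij.injective

lemma binRep_inj (n : ℕ) : Function.Injective (binRep n) := by
  intro k k' h
  have hk : (k : ℕ) < 2 ^ Nat.clog 2 n := lt_of_lt_of_le k.2 (Nat.le_pow_clog (by norm_num) n)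
  have hk' : (k' : ℕ) < 2 ^ Nat.clog 2 n := lt_of_lt_of_le k'.2 (Nat.le_pow_clog (by norm_num) n)
  have hb : ∀ i : ℕ, Nat.testBit (k : ℕ) i = Nat.testBit (k' : ℕ) i := by
    intro i
    by_cases hi : i < Nat.clog 2 n
    · have := congrFun h ⟨i, hi⟩
      simp only [binRep] at this
      have h2 : (k : ℕ) / 2 ^ i % 2 = (k' : ℕ) / 2 ^ i % 2 := by exact_mod_cast this
      simp [Nat.testBit_eq_decide_div_mod_eq, h2]
    · push_neg at hi
      have e1 : Nat.testBit (k : ℕ) i = false :=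
        Nat.testBit_eq_false_of_lt (lt_of_lt_of_le hk (Nat.pow_le_pow_right (by norm_num) hi))
      have e2 : Nat.testBit (k' : ℕ) i = false :=
        Nat.testBit_eq_false_of_lt (lt_of_lt_of_le hk' (Nat.pow_le_pow_right (by norm_num) hi))
      rw [e1, e2]
  exact Fin.ext (Nat.eq_of_testBit_eq hb)

lemma card_fiber_z {K : ℕ} (z : Fin (K+K) → ℤ) (h01 : ∀ i, z i = 0 ∨ z i = 1)
    (hK : (Finset.univ.filter fun i => z i = 1).card = K) (b : ℤ) :
    Nat.card {i // z i = b} = if b = 1 then K else if b = 0 then K else 0 := by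
  have h1 : Nat.card {i // z i = 1} = K := by
    rw [Nat.card_eq_fintype_card, Fintype.card_subtype]
    convert hK using 2
  split_ifs with hb hb0
  · rw [hb]; exact h1
  · subst hb0
    have : {i // z i = 0} ≃ {i // ¬ z i = 1} :=
      Equiv.subtypeEquivRight (fun i => by
        rcases h01 i with h | h <;> simp [h])
    have h1' : Fintype.card {i // z i = 1} = K := by
      rw [← Nat.card_eq_fintype_card]; exact h1
    rw [Nat.card_congr this, Nat.card_eq_fintype_card, Fintype.card_subtype_compl, h1',
      Fintype.card_fin]
    omega
  · have : IsEmpty {i // z i = b} := ⟨fun x => by rcases h01 x.1 with h | h <;> simp_all [x.2]⟩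
    exact Nat.card_of_isEmpty
end helpers

section mainlemmas
variable {nmax K N : ℕ} {η : Fin N → ℕ} {v : (j : Fin N) → Fin (η j) → Fin 8 → ℤ}

abbrev Gt (nmax K N : ℕ) (η : Fin N → ℕ) :=
  Equiv.Perm (Fin nmax) × ((j : Fin N) → Equiv.Perm (Fin (η j))) × Equiv.Perm (Fin (K + K))

lemma Gamma_mul (φ ψ : Gt nmax K N η) (w) :
    Gamma nmax K N η (φ * ψ) w = Gamma nmax K N η ψ (Gamma nmax K N η φ w) := rfl

lemma Gamma_one (w) : Gamma nmax K N η (1 : Gt nmax K N η) w = w := rfl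

lemma Gamma_mem {w} (hw : w ∈ VALID nmax K N η v) (φ : Gt nmax K N η) :
    Gamma nmax K N η φ w ∈ VALID nmax K N η v := by
  obtain ⟨h1, h2, h3, h4⟩ := hw
  refine ⟨?_, ?_, ?_, ?_⟩
  · rw [← h1]; exact φ.1.surjective.range_comp w.1
  · intro j; rw [← h2 j]; exact (φ.2.1 j).surjective.range_comp (w.2.1 j)
  · intro i; exact h3 _
  · refine Eq.trans (Finset.card_bij (fun a _ => φ.2.2 a)
      ?_ ?_ ?_) h4
    · exact fun a ha => by simpa [Gamma] using (Finset.mem_filter.mp ha).2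
    · exact fun a _ a' _ hh => φ.2.2.injective hh
    · refine fun b hb => ⟨φ.2.2.symm b, Finset.mem_filter.mpr ⟨Finset.mem_univ _, ?_⟩, by simp⟩
      show w.2.2 (φ.2.2 (φ.2.2.symm b)) = 1
      simpa using (Finset.mem_filter.mp hb).2

lemma Gamma_surj {w} (hw : w ∈ VALID nmax K N η v)
    (hvdist : ∀ j, Function.Injective (v j)) {y} (hy : y ∈ VALID nmax K N η v) :
    ∃ φ : Gt nmax K N η, Gamma nmax K N η φ w = y := by
  obtain ⟨hw1, hw2, hw3, hw4⟩ := hw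
  obtain ⟨hy1, hy2, hy3, hy4⟩ := hy
  have iw1 : Function.Injective w.1 := inj_of_range_eq (binRep_inj nmax) hw1
  have iy1 : Function.Injective y.1 := inj_of_range_eq (binRep_inj nmax) hy1
  obtain ⟨π, hπ⟩ := aux_exists_perm w.1 y.1 (fun b => by
    rw [card_fiber_of_injective iw1, card_fiber_of_injective iy1, hw1, hy1])
  have iw2 : ∀ j, Function.Injective (w.2.1 j) := fun j => inj_of_range_eq (hvdist j) (hw2 j)
  have iy2 : ∀ j, Function.Injective (y.2.1 j) := fun j => inj_of_range_eq (hvdist j) (hy2 j)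
  choose τ hτ using fun j => aux_exists_perm (w.2.1 j) (y.2.1 j) (fun b => by
    rw [card_fiber_of_injective (iw2 j), card_fiber_of_injective (iy2 j), hw2 j, hy2 j])
  obtain ⟨θ, hθ⟩ := aux_exists_perm w.2.2 y.2.2 (fun b => by
    rw [card_fiber_z w.2.2 hw3 hw4, card_fiber_z y.2.2 hy3 hy4])
  refine ⟨(π, τ, θ), ?_⟩
  refine Prod.ext (funext hπ) (Prod.ext ?_ (funext hθ))
  exact funext fun j => funext fun k => hτ j k
end mainlemmas

lemma sum_ite_const {α : Type*} [Fintype α] (p : α → Prop) [DecidablePred p] (c : ℝ≥0∞) :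
    (∑ x : α, if p x then c else 0) = (Nat.card {x // p x}) * c := by
  rw [Finset.sum_ite, Finset.sum_const_zero, add_zero, Finset.sum_const, nsmul_eq_mul,
    Nat.card_eq_fintype_card, Fintype.card_subtype]

/-- For fixed `w ∈ VALID`, if `φ = (π, τ₁, …, τ_N, θ)` is drawn uniformly at random from
`S = S_{n_max} × S_{η₁} × ⋯ × S_{η_N} × S_{2K}`, then `Γ_φ(w)` is uniformly distributed over
`VALID`: the pushforward of the uniform distribution on `S` under `φ ↦ Γ_φ(w)` is the
uniform distribution on `VALID`. -/
theorem stmt13 (nmax K N : ℕ) (hn : 2 ≤ nmax) (hK : 1 ≤ K) (hN : 1 ≤ N)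
    (η : Fin N → ℕ)
    (v : (j : Fin N) → Fin (η j) → Fin 8 → ℤ)
    (hvbin : ∀ j k i, v j k i = 0 ∨ v j k i = 1)
    (hvdist : ∀ j, Function.Injective (v j))
    (w : (Fin nmax → Fin (Nat.clog 2 nmax) → ℤ)
          × ((j : Fin N) → Fin (η j) → Fin 8 → ℤ) × (Fin (K + K) → ℤ))
    (hw : w ∈ VALID nmax K N η v) :
    ∀ y, (PMF.map (fun φ => Gamma nmax K N η φ w)
            (PMF.uniformOfFintype
              (Equiv.Perm (Fin nmax) × ((j : Fin N) → Equiv.Perm (Fin (η j)))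
                × Equiv.Perm (Fin (K + K))))) y
        = if y ∈ VALID nmax K N η v then (Nat.card (VALID nmax K N η v) : ℝ≥0∞)⁻¹ else 0 := by
  intro y
  set f : Gt nmax K N η → _ := fun φ => Gamma nmax K N η φ w with hfdef
  have hmem : ∀ φ, f φ ∈ VALID nmax K N η v := fun φ => Gamma_mem hw φ
  have hsur : ∀ u ∈ VALID nmax K N η v, ∃ φ, f φ = u := fun u hu => Gamma_surj hw hvdist hu
  let sec : VALID nmax K N η v → Gt nmax K N η := fun u => Classical.choose (hsur u.1 u.2)
  have hsec : ∀ u, f (sec u) = u.1 := fun u => Classical.choose_spec (hsur u.1 u.2)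
  have key : ∀ g s : Gt nmax K N η, f g = f s → f (g * s⁻¹) = w := by
    intro g s h
    calc f (g * s⁻¹) = Gamma nmax K N η s⁻¹ (f g) := Gamma_mul g s⁻¹ w
      _ = Gamma nmax K N η s⁻¹ (f s) := by rw [h]
      _ = Gamma nmax K N η (s * s⁻¹) w := (Gamma_mul s s⁻¹ w).symm
      _ = w := by rw [mul_inv_cancel]; exact Gamma_one w
  have key2 : ∀ g s : Gt nmax K N η, f g = w → f (g * s) = f s := by
    intro g s h
    calc f (g * s) = Gamma nmax K N η s (f g) := Gamma_mul g s w
      _ = Gamma nmax K N η s w := by rw [h]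
      _ = f s := rfl
  set m := Nat.card {g : Gt nmax K N η // f g = w} with hmdef
  have fib : ∀ u : ↥(VALID nmax K N η v),
      Nat.card {g : Gt nmax K N η // f g = (u : _)} = m := by
    intro u
    refine Nat.card_congr
      ⟨fun g => ⟨g.1 * (sec u)⁻¹, key g.1 (sec u) (g.2.trans (hsec u).symm)⟩,
       fun h => ⟨h.1 * sec u, (key2 h.1 (sec u) h.2).trans (hsec u)⟩,
       fun g => Subtype.ext (by simp), fun h => Subtype.ext (by simp)⟩
  have hm0 : m ≠ 0 := by
    have : Nonempty {g : Gt nmax K N η // f g = w} := ⟨⟨1, Gamma_one w⟩⟩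
    exact Nat.card_pos.ne'
  -- VALID is finite
  let fV : Gt nmax K N η → ↥(VALID nmax K N η v) := fun g => ⟨f g, hmem g⟩
  have hfVsurj : Function.Surjective fV := by
    rintro ⟨u, hu⟩
    obtain ⟨g, hg⟩ := hsur u hu
    exact ⟨g, Subtype.ext hg⟩
  haveI : Finite ↥(VALID nmax K N η v) := Finite.of_surjective fV hfVsurj
  haveI : Fintype ↥(VALID nmax K N η v) := Fintype.ofFinite _
  -- card G = card VALID * m
  have hGcard : Fintype.card (Gt nmax K N η) = Nat.card (VALID nmax K N η v) * m := by
    have e1 : Gt nmax K N η ≃ Σ u : ↥(VALID nmax K N η v), {g : Gt nmax K N η // fV g = u} :=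
      (Equiv.sigmaFiberEquiv fV).symm
    have e2 : ∀ u : ↥(VALID nmax K N η v),
        {g : Gt nmax K N η // fV g = u} ≃ {g : Gt nmax K N η // f g = (u : _)} :=
      fun u => Equiv.subtypeEquivRight (fun g => Subtype.ext_iff)
    calc Fintype.card (Gt nmax K N η)
        = Nat.card (Gt nmax K N η) := (Nat.card_eq_fintype_card).symm
      _ = Nat.card (Σ u : ↥(VALID nmax K N η v), {g : Gt nmax K N η // fV g = u}) :=
          Nat.card_congr e1
      _ = ∑ u : ↥(VALID nmax K N η v), Nat.card {g : Gt nmax K N η // fV g = u} := by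
          rw [Nat.card_eq_fintype_card, Fintype.card_sigma]
          exact Finset.sum_congr rfl fun u _ => Nat.card_eq_fintype_card.symm
      _ = ∑ u : ↥(VALID nmax K N η v), m := Finset.sum_congr rfl fun u _ => by
          rw [Nat.card_congr (e2 u), fib u]
      _ = Nat.card (VALID nmax K N η v) * m := by
          rw [Finset.sum_const, Finset.card_univ, smul_eq_mul, Nat.card_eq_fintype_card]
  -- compute the PMF
  rw [PMF.map_apply]
  rw [tsum_fintype]
  simp only [PMF.uniformOfFintype_apply]
  have hstep := sum_ite_const (fun x : Gt nmax K N η => y = f x)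
    ((Fintype.card (Gt nmax K N η) : ℝ≥0∞))⁻¹
  refine Eq.trans (Eq.trans ?_ hstep) ?_
  · congr!
  by_cases hy : y ∈ VALID nmax K N η v
  · rw [if_pos hy]
    have hcardfilter : Nat.card {x : Gt nmax K N η // y = f x} = m := by
      have e3 : {g : Gt nmax K N η // y = f g} ≃ {g : Gt nmax K N η // f g = (⟨y, hy⟩ : ↥(VALID nmax K N η v)).1} :=
        Equiv.subtypeEquivRight (fun g => eq_comm)
      rw [Nat.card_congr e3, fib ⟨y, hy⟩]
    rw [hcardfilter, hGcard]
    have hmtop : (m : ℝ≥0∞) ≠ ⊤ := ENNReal.natCast_ne_top m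
    have hmne : (m : ℝ≥0∞) ≠ 0 := by exact_mod_cast hm0
    rw [Nat.cast_mul, ENNReal.mul_inv (Or.inr hmtop) (Or.inl (ENNReal.natCast_ne_top _))]
    rw [show (m : ℝ≥0∞) * ((Nat.card (VALID nmax K N η v) : ℝ≥0∞)⁻¹ * (m : ℝ≥0∞)⁻¹)
        = (Nat.card (VALID nmax K N η v) : ℝ≥0∞)⁻¹ * ((m : ℝ≥0∞) * (m : ℝ≥0∞)⁻¹) by ring,
      ENNReal.mul_inv_cancel hmne hmtop, mul_one]
  · rw [if_neg hy]
    have : IsEmpty {x : Gt nmax K N η // y = f x} := ⟨fun x => hy (x.2 ▸ hmem x.1)⟩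
    rw [Nat.card_of_isEmpty, Nat.cast_zero, zero_mul]
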